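/- For the van der Corput function ψ, for any z₀ ∈ ℤ_{≥0}, z ∈ ℤ_{>0}, and 0 ≤ x < y < 1: | |{j ∈ [z₀, z₀+z) : ψ(j) ∈ [x,y)}|/z − (y−x) | < (2⌊lg z⌋ + 2)/z. -/

import Mathlib

open Finset

/-- The van der Corput function `ψ`: binary digit reversal of the index.
(For `i ≥ 1` all binary digits of `i` have index `< i`, so summing over
`j < i` captures the full expansion; `ψ 0 = 0`.) -/
noncomputable def vdc (i : ℕ) : ℝ :=
  ∑ j ∈ Finset.range i, if i.testBit j then ((1 : ℝ) / 2) ^ (j + 1) else 0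

lemma vdc_eq_sum {i n : ℕ} (h : i < 2 ^ n) :
    vdc i = ∑ j ∈ Finset.range n, if i.testBit j then ((1 : ℝ) / 2) ^ (j + 1) else 0 := by
  unfold vdc
  rcases le_total i n with hin | hin
  · apply Finset.sum_subset (Finset.range_subset_range.2 hin)
    intro j _ hj'
    simp only [Finset.mem_range, not_lt] at hj'
    rw [Nat.testBit_lt_two_pow (lt_of_lt_of_le (i.lt_two_pow_self)
      (Nat.pow_le_pow_right (by norm_num) hj'))]
    simp
  · symm
    apply Finset.sum_subset (Finset.range_subset_range.2 hin)
    intro j _ hj'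
    simp only [Finset.mem_range, not_lt] at hj'
    rw [Nat.testBit_lt_two_pow (lt_of_lt_of_le h (Nat.pow_le_pow_right (by norm_num) hj'))]
    simp

lemma vdc_nonneg (i : ℕ) : 0 ≤ vdc i := by
  unfold vdc
  apply Finset.sum_nonneg
  intro j _
  split <;> positivity

lemma sum_half_pow (n : ℕ) : ∑ j ∈ Finset.range n, ((1:ℝ)/2)^(j+1) = 1 - (1/2)^n := by
  induction n with
  | zero => simp
  | succ n ih => rw [Finset.sum_range_succ, ih]; ring

lemma vdc_lt_one (i : ℕ) : vdc i < 1 := by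
  unfold vdc
  calc (∑ j ∈ Finset.range i, if i.testBit j then ((1:ℝ)/2)^(j+1) else 0)
      ≤ ∑ j ∈ Finset.range i, ((1:ℝ)/2)^(j+1) := by
        apply Finset.sum_le_sum; intro j _
        split
        · exact le_refl _
        · positivity
    _ = 1 - (1/2)^i := sum_half_pow i
    _ < 1 := by
        have : (0:ℝ) < (1/2)^i := by positivity
        linarith

def brev (k r : ℕ) : ℕ := ∑ j ∈ Finset.range k, if r.testBit j then 2 ^ (k - 1 - j) else 0

lemma brev_succ (k r : ℕ) :
    brev (k+1) r = (if r.testBit 0 then 2 ^ k else 0) + brev k (r / 2) := by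
  unfold brev
  rw [Finset.sum_range_succ', add_comm]
  congr 1
  · apply Finset.sum_congr rfl
    intro j _
    rw [Nat.testBit_div_two]
    have h : k + 1 - 1 - (j + 1) = k - 1 - j := by omega
    rw [h]

lemma brev_lt (k : ℕ) : ∀ r, brev k r < 2 ^ k := by
  induction k with
  | zero => intro r; simp [brev]
  | succ k ih =>
    intro r
    rw [brev_succ]
    have := ih (r / 2)
    have h2 : (2:ℕ)^(k+1) = 2^k + 2^k := by rw [pow_succ]; ring
    split <;> omega

lemma brev_inj (k : ℕ) : ∀ r s, r < 2 ^ k → s < 2 ^ k → brev k r = brev k s → r = s := by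
  induction k with
  | zero => intro r s hr hs _; omega
  | succ k ih =>
    intro r s hr hs h
    rw [brev_succ, brev_succ] at h
    have h1 := brev_lt k (r / 2)
    have h2 := brev_lt k (s / 2)
    have hp : (2:ℕ)^(k+1) = 2^k + 2^k := by rw [pow_succ]; ring
    have hb : r.testBit 0 = s.testBit 0 ∧ brev k (r / 2) = brev k (s / 2) := by
      rcases hr0 : r.testBit 0 <;> rcases hs0 : s.testBit 0 <;>
        simp [hr0, hs0] at h ⊢ <;> try omega
    have hdiv : r / 2 = s / 2 := ih _ _ (by omega) (by omega) hb.2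
    have hbit : (r % 2 = 1) = (s % 2 = 1) := by
      have := hb.1
      simp [Nat.testBit_zero] at this
      simp [this]
    have : r % 2 = s % 2 := by
      rcases Nat.mod_two_eq_zero_or_one r with h' | h' <;>
        rcases Nat.mod_two_eq_zero_or_one s with h'' | h'' <;> simp [h', h''] at hbit ⊢ <;> omega
    omega

lemma testBit_low {k j : ℕ} (b r : ℕ) (hj : j < k) :
    (b * 2 ^ k + r).testBit j = r.testBit j := by
  obtain ⟨s, rfl⟩ : ∃ s, k = s + 1 + j := ⟨k - 1 - j, by omega⟩
  have h1 : b * 2 ^ (s + 1 + j) + r = r + b * 2 ^ s * 2 * 2 ^ j := by ring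
  rw [Nat.testBit_eq_decide_div_mod_eq, Nat.testBit_eq_decide_div_mod_eq, h1,
      Nat.add_mul_div_right _ _ (Nat.two_pow_pos j),
      Nat.add_mul_mod_self_right]

lemma testBit_high {k : ℕ} (b r t : ℕ) (hr : r < 2 ^ k) :
    (b * 2 ^ k + r).testBit (k + t) = b.testBit t := by
  rw [Nat.testBit_eq_decide_div_mod_eq, Nat.testBit_eq_decide_div_mod_eq]
  have h : (b * 2 ^ k + r) / 2 ^ (k + t) = b / 2 ^ t := by
    rw [pow_add, ← Nat.div_div_eq_div_mul, mul_comm b, Nat.mul_add_div (Nat.two_pow_pos k),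
      Nat.div_eq_of_lt hr, add_zero]
  rw [h]

lemma brev_div (k r : ℕ) (hr : r < 2 ^ k) :
    ((brev k r : ℝ)) / 2 ^ k = ∑ j ∈ Finset.range k, if r.testBit j then ((1:ℝ)/2)^(j+1) else 0 := by
  have : ((brev k r : ℝ)) = ∑ j ∈ Finset.range k, if r.testBit j then ((2:ℝ))^(k-1-j) else 0 := by
    unfold brev
    push_cast
    apply Finset.sum_congr rfl
    intro j _
    split <;> norm_num
  rw [this, Finset.sum_div]
  apply Finset.sum_congr rfl
  intro j hj
  have hjk : j < k := Finset.mem_range.1 hj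
  have he : (k - 1 - j) + (j + 1) = k := by omega
  split
  · rw [div_eq_iff (by positivity : ((2:ℝ))^k ≠ 0)]
    symm
    calc ((1:ℝ)/2)^(j+1) * 2^k = (1/2)^(j+1) * (2^(k-1-j) * 2^(j+1)) := by
          rw [← pow_add, he]
      _ = 2^(k-1-j) * ((1/2) * 2)^(j+1) := by rw [mul_pow]; ring
      _ = 2^(k-1-j) := by norm_num
  · simp

lemma vdc_split (b k r : ℕ) (hr : r < 2 ^ k) :
    vdc (b * 2 ^ k + r) = ((brev k r : ℝ) + vdc b) / 2 ^ k := by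
  obtain ⟨m, hm⟩ : ∃ m, b < 2 ^ m := ⟨b, b.lt_two_pow_self⟩
  have hi : b * 2 ^ k + r < 2 ^ (k + m) := by
    calc b * 2 ^ k + r < b * 2 ^ k + 2 ^ k := by omega
      _ = (b + 1) * 2 ^ k := by ring
      _ ≤ 2 ^ m * 2 ^ k := Nat.mul_le_mul_right _ (by omega)
      _ = 2 ^ (k + m) := by rw [← pow_add, add_comm]
  rw [vdc_eq_sum hi, Finset.sum_range_add, add_div, brev_div k r hr]
  congr 1
  · apply Finset.sum_congr rfl
    intro j hj
    rw [testBit_low b r (Finset.mem_range.1 hj)]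
  · rw [vdc_eq_sum hm, Finset.sum_div]
    apply Finset.sum_congr rfl
    intro t _
    rw [testBit_high b r t hr]
    split
    · rw [eq_div_iff (by positivity : ((2:ℝ))^k ≠ 0)]
      have he2 : k + t + 1 = (t + 1) + k := by omega
      rw [he2, pow_add, mul_assoc, ← mul_pow]
      norm_num
    · simp

lemma count_interval (x y θ : ℝ) (hx : 0 ≤ x) (hxy : x ≤ y) (hy : y < 1)
    (hθ : 0 ≤ θ) (hθ1 : θ < 1) (N : ℕ) (hN : 0 < N) :
    |(((Finset.range N).filter fun m : ℕ => x ≤ ((m:ℝ)+θ)/(N:ℝ) ∧ ((m:ℝ)+θ)/(N:ℝ) < y).card : ℝ)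
      - (N:ℝ)*(y-x)| < 1 := by
  have hNpos : (0:ℝ) < N := by exact_mod_cast hN
  set A : ℝ := N * x - θ with hA
  set B : ℝ := N * y - θ with hB
  set a : ℕ := ⌈A⌉.toNat with ha
  set bb : ℕ := ⌈B⌉.toNat with hbb
  have hcond : ∀ m : ℕ, (x ≤ ((m:ℝ)+θ)/(N:ℝ) ∧ ((m:ℝ)+θ)/(N:ℝ) < y) ↔ (a ≤ m ∧ m < bb) := by
    intro m
    rw [le_div_iff₀ hNpos, div_lt_iff₀ hNpos]
    constructor
    · rintro ⟨h1, h2⟩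
      constructor
      · rw [ha, Int.toNat_le, Int.ceil_le]
        push_cast
        nlinarith
      · rw [hbb, Int.lt_toNat, Int.lt_ceil]
        push_cast
        nlinarith
    · rintro ⟨h1, h2⟩
      rw [ha, Int.toNat_le, Int.ceil_le] at h1
      rw [hbb, Int.lt_toNat, Int.lt_ceil] at h2
      push_cast at h1 h2
      constructor <;> nlinarith
  have hbbN : bb ≤ N := by
    have h1 : ⌈B⌉ ≤ (N:ℤ) := Int.ceil_le.2 (by push_cast; nlinarith)
    omega
  have hfilter : ((Finset.range N).filter fun m : ℕ => x ≤ ((m:ℝ)+θ)/(N:ℝ) ∧ ((m:ℝ)+θ)/(N:ℝ) < y)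
      = Finset.Ico a bb := by
    ext m
    simp only [Finset.mem_filter, Finset.mem_range, Finset.mem_Ico, hcond m]
    omega
  rw [hfilter, Nat.card_Ico]
  have hab : a ≤ bb := by
    have : ⌈A⌉ ≤ ⌈B⌉ := Int.ceil_le_ceil (by rw [hA, hB]; nlinarith)
    omega
  have hA1 : A ≤ (a:ℝ) := by
    calc A ≤ (⌈A⌉:ℝ) := Int.le_ceil A
      _ ≤ ((a:ℤ):ℝ) := by exact_mod_cast Int.self_le_toNat ⌈A⌉
      _ = (a:ℝ) := by push_cast; rfl
  have hAneg : -1 < A := by nlinarith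
  have hBneg : -1 < B := by nlinarith
  have hA2 : (a:ℝ) < A + 1 := by
    rcases le_or_gt ⌈A⌉ 0 with h | h
    · have h0 : a = 0 := by omega
      rw [h0]
      push_cast
      linarith
    · have ha'' : (a:ℤ) = ⌈A⌉ := Int.toNat_of_nonneg h.le
      have ha' : ((a:ℤ):ℝ) = (⌈A⌉:ℝ) := by exact_mod_cast ha''
      have := Int.ceil_lt_add_one A
      calc (a:ℝ) = ((a:ℤ):ℝ) := by push_cast; rfl
        _ = (⌈A⌉:ℝ) := ha'
        _ < A + 1 := this
  have hB1 : B ≤ (bb:ℝ) := by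
    calc B ≤ (⌈B⌉:ℝ) := Int.le_ceil B
      _ ≤ ((bb:ℤ):ℝ) := by exact_mod_cast Int.self_le_toNat ⌈B⌉
      _ = (bb:ℝ) := by push_cast; rfl
  have hB2 : (bb:ℝ) < B + 1 := by
    rcases le_or_gt ⌈B⌉ 0 with h | h
    · have h0 : bb = 0 := by omega
      rw [h0]
      push_cast
      linarith
    · have hb'' : (bb:ℤ) = ⌈B⌉ := Int.toNat_of_nonneg h.le
      have hb' : ((bb:ℤ):ℝ) = (⌈B⌉:ℝ) := by exact_mod_cast hb''
      have := Int.ceil_lt_add_one B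
      calc (bb:ℝ) = ((bb:ℤ):ℝ) := by push_cast; rfl
        _ = (⌈B⌉:ℝ) := hb'
        _ < B + 1 := this
  have hcast : ((bb - a : ℕ) : ℝ) = (bb:ℝ) - (a:ℝ) := by
    push_cast [hab]
    ring
  rw [hcast]
  have hBA : (N:ℝ)*(y-x) = B - A := by rw [hA, hB]; ring
  rw [hBA, abs_lt]
  constructor <;> linarith

lemma count_block (x y : ℝ) (hx : 0 ≤ x) (hxy : x ≤ y) (hy : y < 1) (b k : ℕ) :
    |(((Finset.Ico (b * 2^k) (b * 2^k + 2^k)).filter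
        fun j => x ≤ vdc j ∧ vdc j < y).card : ℝ) - ((2^k : ℕ) : ℝ) * (y - x)| < 1 := by
  set N := 2^k with hN
  have hNpos : 0 < N := Nat.pow_pos (by norm_num)
  set θ := vdc b with hθ
  -- step a : translate Ico to range
  have hIco : Finset.Ico (b * N) (b * N + N) = (Finset.range N).image (fun r => b * N + r) := by
    ext j
    simp only [Finset.mem_Ico, Finset.mem_image, Finset.mem_range]
    constructor
    · intro h
      exact ⟨j - b * N, by omega, by omega⟩
    · rintro ⟨r, hr, rfl⟩
      omega
  have hinj : Function.Injective (fun r => b * N + r) := fun r s h => by simpa using h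
  rw [hIco, Finset.filter_image, Finset.card_image_of_injective _ hinj]
  -- step b : rewrite predicate via vdc_split
  have hpred : ((Finset.range N).filter fun r => x ≤ vdc (b * N + r) ∧ vdc (b * N + r) < y)
      = ((Finset.range N).filter fun r : ℕ =>
          x ≤ ((brev k r : ℝ) + θ)/((N:ℕ):ℝ) ∧ ((brev k r : ℝ) + θ)/((N:ℕ):ℝ) < y) := by
    apply Finset.filter_congr
    intro r hr
    rw [vdc_split b k r (by simpa [hN] using Finset.mem_range.1 hr)]
    have hcast : ((N:ℕ):ℝ) = (2:ℝ)^k := by rw [hN]; push_cast; rfl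
    rw [hcast]
  rw [hpred]
  -- step c : reindex by brev
  have himg : (Finset.range N).image (brev k) = Finset.range N := by
    apply Finset.eq_of_subset_of_card_le
    · intro m hm
      simp only [Finset.mem_image, Finset.mem_range] at hm ⊢
      obtain ⟨r, _, rfl⟩ := hm
      rw [hN]; exact brev_lt k r
    · rw [Finset.card_image_of_injOn]
      intro r hr s hs h
      simp only [Finset.coe_range, Set.mem_Iio] at hr hs
      exact brev_inj k r s (by omega) (by omega) h
  have hcards : ((Finset.range N).filter fun r : ℕ =>
          x ≤ ((brev k r : ℝ) + θ)/((N:ℕ):ℝ) ∧ ((brev k r : ℝ) + θ)/((N:ℕ):ℝ) < y).card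
      = ((Finset.range N).filter fun m : ℕ =>
          x ≤ ((m:ℝ) + θ)/((N:ℕ):ℝ) ∧ ((m:ℝ) + θ)/((N:ℕ):ℝ) < y).card := by
    conv_rhs => rw [← himg]
    rw [Finset.filter_image, Finset.card_image_of_injOn]
    intro r hr s hs h
    simp only [Finset.coe_filter, Set.mem_setOf_eq, Finset.mem_range] at hr hs
    exact brev_inj k r s (by omega) (by omega) h
  rw [hcards]
  exact count_interval x y θ hx hxy hy (vdc_nonneg b) (vdc_lt_one b) N hNpos

noncomputable def cnt (x y : ℝ) (a n : ℕ) : ℕ :=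
  ((Finset.Ico a (a + n)).filter fun j => x ≤ vdc j ∧ vdc j < y).card

lemma cnt_zero (x y : ℝ) (a : ℕ) : cnt x y a 0 = 0 := by simp [cnt]

lemma cnt_add (x y : ℝ) (a n m : ℕ) :
    cnt x y a (n + m) = cnt x y a n + cnt x y (a + n) m := by
  unfold cnt
  have h : a + (n + m) = (a + n) + m := by omega
  rw [h, ← Finset.Ico_union_Ico_eq_Ico (Nat.le_add_right a n) (Nat.le_add_right (a+n) m),
    Finset.filter_union, Finset.card_union_of_disjoint]
  exact Finset.disjoint_filter_filter (Finset.Ico_disjoint_Ico_consecutive a (a+n) ((a+n)+m))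

lemma err_add (x y : ℝ) (a n m : ℕ) :
    |(cnt x y a (n + m) : ℝ) - (↑(n + m))*(y-x)| ≤
      |(cnt x y a n : ℝ) - (n:ℝ)*(y-x)| + |(cnt x y (a+n) m : ℝ) - (m:ℝ)*(y-x)| := by
  have h : (cnt x y a (n+m) : ℝ) - (↑(n + m))*(y-x)
      = ((cnt x y a n : ℝ) - (n:ℝ)*(y-x)) + ((cnt x y (a+n) m : ℝ) - (m:ℝ)*(y-x)) := by
    rw [cnt_add]
    push_cast
    ring
  rw [h]
  exact abs_add_le _ _

lemma err_block (x y : ℝ) (hx : 0 ≤ x) (hxy : x ≤ y) (hy : y < 1) (k a : ℕ)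
    (hdvd : 2^k ∣ a) :
    |(cnt x y a (2^k) : ℝ) - ((2^k : ℕ) : ℝ)*(y-x)| < 1 := by
  obtain ⟨b, rfl⟩ := hdvd
  have h : 2^k * b = b * 2^k := by ring
  rw [h]
  exact count_block x y hx hxy hy b k

lemma err_up (x y : ℝ) (hx : 0 ≤ x) (hxy : x ≤ y) (hy : y < 1) :
    ∀ k a n, n < 2^k → 2^k ∣ (a + n) →
      |(cnt x y a n : ℝ) - (n:ℝ)*(y-x)| < ((max k 1 : ℕ) : ℝ) := by
  intro k
  induction k with
  | zero =>
    intro a n hn _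
    have h0 : n = 0 := by omega
    subst h0
    simp [cnt_zero]
  | succ k ih =>
    intro a n hn hdvd
    have hp : (2:ℕ)^(k+1) = 2^k + 2^k := by rw [pow_succ]; ring
    have h2pos := Nat.two_pow_pos k
    rcases lt_or_ge n (2^k) with h | h
    · have h2 : 2^k ∣ (a + n) := dvd_trans (pow_dvd_pow 2 (Nat.le_succ k)) hdvd
      have hih := ih a n h h2
      have hle : ((max k 1 : ℕ) : ℝ) ≤ ((max (k+1) 1 : ℕ) : ℝ) := by
        have h3 : max k 1 ≤ max (k+1) 1 := by omega
        exact_mod_cast h3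
      linarith
    · set m := n - 2^k with hm
      have hn' : n = m + 2^k := by omega
      have hsplit := err_add x y a m (2^k)
      rw [← hn'] at hsplit
      have hdvd2 : 2^k ∣ (a + m) := by
        obtain ⟨c, hc⟩ := hdvd
        refine ⟨2*c - 1, ?_⟩
        have hc1 : 1 ≤ c := by
          rcases Nat.eq_zero_or_pos c with rfl | h1
          · omega
          · exact h1
        have e1 : 2^k * (2*c - 1) + 2^k = 2^k * (2*c) := by
          rw [← Nat.mul_succ]
          congr 1
          omega
        have e2 : 2^(k+1) * c = 2^k * (2*c) := by ring
        omega
      have hblock := err_block x y hx hxy hy k (a+m) hdvd2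
      have hleft := ih a m (by omega) hdvd2
      have hmax1 : (max (k+1) 1) = k + 1 := by omega
      rcases Nat.eq_zero_or_pos k with rfl | hk
      · have hm0 : m = 0 := by omega
        have hzero : |(cnt x y a m : ℝ) - (m:ℝ)*(y-x)| = 0 := by
          rw [hm0]; simp [cnt_zero]
        rw [hmax1]
        push_cast
        push_cast at hsplit hblock
        linarith
      · have hmaxk : (max k 1) = k := by omega
        rw [hmax1]
        rw [hmaxk] at hleft
        push_cast at hleft hblock hsplit ⊢
        linarith

lemma err_down (x y : ℝ) (hx : 0 ≤ x) (hxy : x ≤ y) (hy : y < 1) :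
    ∀ k a n, n < 2^k → 2^k ∣ a →
      |(cnt x y a n : ℝ) - (n:ℝ)*(y-x)| < ((max k 1 : ℕ) : ℝ) := by
  intro k
  induction k with
  | zero =>
    intro a n hn _
    have h0 : n = 0 := by omega
    subst h0
    simp [cnt_zero]
  | succ k ih =>
    intro a n hn hdvd
    have hp : (2:ℕ)^(k+1) = 2^k + 2^k := by rw [pow_succ]; ring
    have h2pos := Nat.two_pow_pos k
    rcases lt_or_ge n (2^k) with h | h
    · have h2 : 2^k ∣ a := dvd_trans (pow_dvd_pow 2 (Nat.le_succ k)) hdvd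
      have hih := ih a n h h2
      have hle : ((max k 1 : ℕ) : ℝ) ≤ ((max (k+1) 1 : ℕ) : ℝ) := by
        have h3 : max k 1 ≤ max (k+1) 1 := by omega
        exact_mod_cast h3
      linarith
    · set m := n - 2^k with hm
      have hn' : n = 2^k + m := by omega
      have hsplit := err_add x y a (2^k) m
      rw [← hn'] at hsplit
      have hdvdk : 2^k ∣ a := dvd_trans (pow_dvd_pow 2 (Nat.le_succ k)) hdvd
      have hblock := err_block x y hx hxy hy k a hdvdk
      have hdvd2 : 2^k ∣ (a + 2^k) := Dvd.dvd.add hdvdk dvd_rfl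
      have hleft := ih (a + 2^k) m (by omega) hdvd2
      have hmax1 : (max (k+1) 1) = k + 1 := by omega
      rcases Nat.eq_zero_or_pos k with rfl | hk
      · have hm0 : m = 0 := by omega
        have hzero : |(cnt x y (a + 2^0) m : ℝ) - (m:ℝ)*(y-x)| = 0 := by
          rw [hm0]; simp [cnt_zero]
        rw [hmax1]
        push_cast
        push_cast at hsplit hblock
        simp only [pow_zero] at hzero hsplit hblock ⊢
        linarith
      · have hmaxk : (max k 1) = k := by omega
        rw [hmax1]
        rw [hmaxk] at hleft
        push_cast at hleft hblock hsplit ⊢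
        linarith

/-- `| |{j ∈ [z₀, z₀+z) : ψ(j) ∈ [x,y)}|/z − (y−x) | < (2⌊lg z⌋ + 2)/z`. -/
theorem stmt_18 : ∀ (z₀ z : ℕ) (x y : ℝ), 0 < z → 0 ≤ x → x < y → y < 1 →
    |((((Finset.Ico z₀ (z₀ + z)).filter
        fun j => x ≤ vdc j ∧ vdc j < y).card : ℝ) / z - (y - x))| <
      (2 * (Nat.log 2 z : ℝ) + 2) / z := by
  intro z₀ z x y hz hx hxy hy
  have hxy' : x ≤ y := le_of_lt hxy
  set k := Nat.log 2 z with hk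
  have hk1 : 2^k ≤ z := Nat.pow_log_le_self 2 (by omega)
  have hk2 : z < 2^(k+1) := Nat.lt_pow_succ_log_self (by norm_num) z
  have hp : (2:ℕ)^(k+1) = 2^k + 2^k := by rw [pow_succ]; ring
  have h2pos := Nat.two_pow_pos k
  have key : |(cnt x y z₀ z : ℝ) - (z:ℝ)*(y-x)| < 2*(k:ℝ) + 2 := by
    rcases Nat.eq_zero_or_pos k with hk0 | hkpos
    · have hz1 : z = 1 := by
        rw [hk0] at hk1 hk2
        norm_num at hk1 hk2
        omega
      rw [hz1, hk0]
      have hb := err_block x y hx hxy' hy 0 z₀ (by simp)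
      simp only [pow_zero] at hb
      push_cast at hb ⊢
      linarith
    · set r := z₀ % 2^k with hr
      set L := (2^k - r) % 2^k with hL
      have hrlt : r < 2^k := Nat.mod_lt _ h2pos
      have hLlt : L < 2^k := Nat.mod_lt _ h2pos
      have hLz : L ≤ z := by omega
      have hdm := Nat.div_add_mod z₀ (2^k)
      have hdvd : 2^k ∣ (z₀ + L) := by
        rcases Nat.eq_zero_or_pos r with h0 | hpos
        · have hL0 : L = 0 := by
            rw [hL, h0]
            simp
          rw [hL0, Nat.add_zero]
          exact ⟨z₀ / 2^k, by omega⟩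
        · have hL1 : L = 2^k - r := by
            rw [hL]
            exact Nat.mod_eq_of_lt (by omega)
          refine ⟨z₀ / 2^k + 1, ?_⟩
          have e1 : 2^k * (z₀ / 2^k + 1) = 2^k * (z₀ / 2^k) + 2^k := by ring
          omega
      have hup := err_up x y hx hxy' hy k z₀ L hLlt hdvd
      set n' := z - L with hn'
      have hsplit := err_add x y z₀ L n'
      have hz' : z = L + n' := by omega
      rw [← hz'] at hsplit
      have hmaxk : max k 1 = k := by omega
      rw [hmaxk] at hup
      rcases lt_or_ge n' (2^k) with h | h
      · have hdn := err_down x y hx hxy' hy k (z₀ + L) n' h hdvd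
        rw [hmaxk] at hdn
        push_cast at hup hdn hsplit ⊢
        linarith
      · have hsplit2 := err_add x y (z₀ + L) (2^k) (n' - 2^k)
        have hn2 : n' = 2^k + (n' - 2^k) := by omega
        rw [← hn2] at hsplit2
        have hblock := err_block x y hx hxy' hy k (z₀ + L) hdvd
        have hdvd3 : 2^k ∣ (z₀ + L + 2^k) := Dvd.dvd.add hdvd dvd_rfl
        have hdn := err_down x y hx hxy' hy k (z₀ + L + 2^k) (n' - 2^k) (by omega) hdvd3
        rw [hmaxk] at hdn
        push_cast at hup hdn hsplit hsplit2 hblock ⊢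
        linarith
  have hzR : (0:ℝ) < z := by exact_mod_cast hz
  have hgoal : ((((Finset.Ico z₀ (z₀ + z)).filter fun j => x ≤ vdc j ∧ vdc j < y).card : ℝ))
      = (cnt x y z₀ z : ℝ) := rfl
  rw [hgoal]
  have he : (cnt x y z₀ z : ℝ)/z - (y-x) = ((cnt x y z₀ z : ℝ) - z*(y-x))/z := by
    field_simp
  rw [he, abs_div, abs_of_pos hzR]
  apply div_lt_div_of_pos_right key hzR
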